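/- If nonnegative real sequences v(t) satisfy v(t) ≤ ρ·v(t-1) + 2α(t)·K·√(v(t-1)) + α(t)²·K² for constants 0 ≤ ρ < 1, K > 0, and a nonnegative step-size sequence α with Σα(t)² < ∞, then Σ_t v(t) < ∞ and v(t) → 0. -/

import Mathlib

open Filter

/-- If nonnegative real sequences `v` satisfy
`v t ≤ ρ v (t-1) + 2 α t K √(v (t-1)) + (α t)^2 K^2` for `0 ≤ ρ < 1`, `K > 0`,
nonnegative `α` with `∑ α t ^ 2 < ∞`, then `∑ v t < ∞` and `v t → 0`. -/
theorem stmt0 (ρ K : ℝ) (hρ0 : 0 ≤ ρ) (hρ1 : ρ < 1) (hK : 0 < K)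
    (α v : ℕ → ℝ) (hα : ∀ t, 0 ≤ α t) (hα2 : Summable (fun t => (α t) ^ 2))
    (hv : ∀ t, 0 ≤ v t)
    (hrec : ∀ t : ℕ, 1 ≤ t →
      v t ≤ ρ * v (t - 1) + 2 * α t * K * Real.sqrt (v (t - 1)) + (α t) ^ 2 * K ^ 2) :
    Summable v ∧ Tendsto v atTop (nhds 0) := by
  set ε : ℝ := (1 - ρ) / 2 with hεdef
  have hε : 0 < ε := by simp [hεdef]; linarith
  set ρ' : ℝ := (1 + ρ) / 2 with hρ'def
  have hρ'0 : 0 ≤ ρ' := by positivity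
  have hρ'1 : ρ' < 1 := by simp [hρ'def]; linarith
  set C : ℝ := K ^ 2 * (1 + 1 / ε) with hCdef
  have hC : 0 ≤ C := by positivity
  -- absorbed recursion
  have hrec' : ∀ i : ℕ, v (i + 1) ≤ ρ' * v i + C * α (i + 1) ^ 2 := by
    intro i
    have h := hrec (i + 1) (by omega)
    simp only [Nat.add_sub_cancel] at h
    set s : ℝ := Real.sqrt (v i) with hs
    have hs0 : 0 ≤ s := Real.sqrt_nonneg _
    have hs2 : s ^ 2 = v i := Real.sq_sqrt (hv i)
    have key : 2 * α (i + 1) * K * s ≤ ε * v i + α (i + 1) ^ 2 * K ^ 2 / ε := by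
      rw [← hs2, div_eq_mul_inv, ← mul_le_mul_iff_right₀ hε]
      have heq : ε * (ε * s ^ 2 + α (i + 1) ^ 2 * K ^ 2 * ε⁻¹)
          = ε ^ 2 * s ^ 2 + α (i + 1) ^ 2 * K ^ 2 := by
        field_simp
      rw [heq]
      nlinarith [sq_nonneg (ε * s - α (i + 1) * K)]
    have : ρ * v i + ε * v i ≤ ρ' * v i := by
      have : ρ + ε = ρ' := by simp [hεdef, hρ'def]; ring
      nlinarith [hv i]
    have hCexp : α (i + 1) ^ 2 * K ^ 2 / ε + α (i + 1) ^ 2 * K ^ 2 ≤ C * α (i + 1) ^ 2 := by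
      apply le_of_eq
      rw [hCdef]
      field_simp
      ring
    linarith
  -- partial sums bounded
  set A : ℝ := ∑' t, (α t) ^ 2 with hA
  have hA0 : 0 ≤ A := tsum_nonneg fun t => sq_nonneg _
  set M : ℝ := (v 0 + C * A) / (1 - ρ') with hM
  have hM0 : 0 ≤ M := by
    apply div_nonneg
    · nlinarith [hv 0]
    · linarith
  have hbound : ∀ n, ∑ t ∈ Finset.range n, v t ≤ M := by
    intro n
    match n with
    | 0 => simpa using hM0
    | Nat.succ n =>
      set S : ℝ := ∑ t ∈ Finset.range (n + 1), v t with hS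
      have h1 : S = (∑ i ∈ Finset.range n, v (i + 1)) + v 0 := Finset.sum_range_succ' v n
      have h2 : ∑ i ∈ Finset.range n, v (i + 1) ≤
          ρ' * (∑ i ∈ Finset.range n, v i) + C * ∑ i ∈ Finset.range n, α (i + 1) ^ 2 := by
        rw [Finset.mul_sum, Finset.mul_sum, ← Finset.sum_add_distrib]
        exact Finset.sum_le_sum fun i _ => hrec' i
      have h3 : ∑ i ∈ Finset.range n, v i ≤ S := by
        rw [hS]
        exact Finset.sum_le_sum_of_subset_of_nonneg
          (Finset.range_subset_range.mpr (by omega)) (fun i _ _ => hv i)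
      have h4 : ∑ i ∈ Finset.range n, α (i + 1) ^ 2 ≤ A := by
        have e : ∑ i ∈ Finset.range (n + 1), α i ^ 2 =
            (∑ i ∈ Finset.range n, α (i + 1) ^ 2) + α 0 ^ 2 :=
          Finset.sum_range_succ' (fun i => α i ^ 2) n
        have := Summable.sum_le_tsum (Finset.range (n + 1)) (fun i _ => sq_nonneg (α i)) hα2
        nlinarith [sq_nonneg (α 0)]
      have hSle : S ≤ v 0 + ρ' * S + C * A := by
        nlinarith
      have : (1 - ρ') * S ≤ v 0 + C * A := by nlinarith
      rw [hM, le_div_iff₀ (by linarith : (0:ℝ) < 1 - ρ')]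
      nlinarith
  have hsum : Summable v := summable_of_sum_range_le hv hbound
  exact ⟨hsum, hsum.tendsto_atTop_zero⟩
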